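/- For n ≥ 3, the large rank of the multiplicative semigroup A^+(B_n) equals (n!)·n² + n⁴ + 2; equivalently, the set V = {ξ_{(i,j)} : i, j ∈ [n]} of nonzero constant maps is a prime subset of A^+(B_n) of minimum cardinality n², and |A^+(B_n)| = (n!+1)n² + n⁴ + 1. -/

import Mathlib

def Bn (n : ℕ) : Type := Option (Fin n × Fin n)

def Bn.mul {n : ℕ} : Bn n → Bn n → Bn n
  | some (i, j), some (k, l) => if j = k then some (i, l) else none
  | _, _ => none

instance (n : ℕ) : Mul (Bn n) := ⟨Bn.mul⟩

instance (n : ℕ) : Semigroup (Bn n) where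
  mul_assoc a b c := by
    show Bn.mul (Bn.mul a b) c = Bn.mul a (Bn.mul b c)
    change Option (Fin n × Fin n) at a b c
    rcases a with _ | ⟨i, j⟩ <;> rcases b with _ | ⟨k, l⟩ <;> try rfl
    by_cases h1 : j = k
    · have e1 : Bn.mul (some (i, j)) (some (k, l)) = (some (i, l) : Bn n) := if_pos h1
      rw [e1]
      rcases c with _ | ⟨p, q⟩
      · rfl
      by_cases h2 : l = p
      · have e2 : Bn.mul (some (k, l)) (some (p, q)) = (some (k, q) : Bn n) := if_pos h2
        rw [e2]
        exact (if_pos h2).trans (if_pos h1).symm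
      · have e2 : Bn.mul (some (k, l)) (some (p, q)) = (none : Bn n) := if_neg h2
        rw [e2]
        exact if_neg h2
    · have e1 : Bn.mul (some (i, j)) (some (k, l)) = (none : Bn n) := if_neg h1
      rw [e1]
      rcases c with _ | ⟨p, q⟩
      · rfl
      by_cases h2 : l = p
      · have e2 : Bn.mul (some (k, l)) (some (p, q)) = (some (k, q) : Bn n) := if_pos h2
        rw [e2]
        exact (if_neg h1).symm
      · have e2 : Bn.mul (some (k, l)) (some (p, q)) = (none : Bn n) := if_neg h2
        rw [e2]
        rfl

/-- Maps on `Bn n`, composed left-to-right: `x (f * g) = (x f) g`. -/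
def MapBn (n : ℕ) : Type := Bn n → Bn n

instance (n : ℕ) : Monoid (MapBn n) where
  mul f g := fun x => g (f x)
  one := fun x => x
  mul_assoc _ _ _ := rfl
  one_mul _ := rfl
  mul_one _ := rfl

/-- The constant map `ξ_c`. -/
def constMap (n : ℕ) (c : Bn n) : MapBn n := fun _ => c

/-- The `n`-support map `(p, q; σ)`, sending `(i, p) ↦ (iσ, q)` and all else to `θ`. -/
def nSuppMap (n : ℕ) (p q : Fin n) (σ : Equiv.Perm (Fin n)) : MapBn n :=
  fun x =>
    match x with
    | some (i, j) => if j = p then some (σ i, q) else none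
    | none => none

instance (n : ℕ) : DecidableEq (Bn n) :=
  inferInstanceAs (DecidableEq (Option (Fin n × Fin n)))

/-- The singleton-support map `((k,l) → (p,q))`. -/
def sglMap (n : ℕ) (k l p q : Fin n) : MapBn n :=
  fun x => @ite _ (x = some (k, l)) (instDecidableEqBn n x (some (k, l))) (some (p, q)) none

/-- The multiplicative semigroup reduct `A⁺(Bₙ)`, as a set of maps on `Bn n`. -/
def APlus (n : ℕ) : Set (MapBn n) :=
  {f | (∃ c, f = constMap n c) ∨ (∃ p q σ, f = nSuppMap n p q σ) ∨
       (∃ k l p q, f = sglMap n k l p q)}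

/-- Independence of a subset of a semigroup. -/
def IndependentIn {S : Type*} [Semigroup S] (U : Set S) : Prop :=
  ∀ a ∈ U, a ∉ Subsemigroup.closure (U \ {a})
namespace APlusProof

variable {n : ℕ}

instance : Fintype (Bn n) := inferInstanceAs (Fintype (Option (Fin n × Fin n)))
instance : Fintype (MapBn n) := inferInstanceAs (Fintype (Bn n → Bn n))

lemma mul_apply (f g : MapBn n) (x : Bn n) : (f * g) x = g (f x) := rfl

lemma sgl_self (k l p q : Fin n) : sglMap n k l p q (some (k, l)) = some (p, q) := if_pos rfl
lemma sgl_ne (k l p q : Fin n) (x : Bn n) (h : x ≠ some (k, l)) : sglMap n k l p q x = none :=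
  if_neg h

lemma const_mul (c : Bn n) (g : MapBn n) : constMap n c * g = constMap n (g c) := rfl
lemma mul_const (f : MapBn n) (c : Bn n) : f * constMap n c = constMap n c := rfl

lemma nSupp_mul_nSupp (p r q : Fin n) (τ υ : Equiv.Perm (Fin n)) :
    nSuppMap n p r τ * nSuppMap n r q υ = nSuppMap n p q (υ * τ) := by
  funext x
  rcases x with _ | ⟨i, j⟩
  · rfl
  · show nSuppMap n r q υ (nSuppMap n p r τ (some (i, j))) = _
    by_cases h : j = p <;> simp [nSuppMap, h] <;> rfl

lemma nSupp_mul_nSupp_ne {r r' : Fin n} (p q : Fin n) (τ υ : Equiv.Perm (Fin n))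
    (h : r ≠ r') : nSuppMap n p r τ * nSuppMap n r' q υ = constMap n none := by
  funext x
  rcases x with _ | ⟨i, j⟩
  · rfl
  · show nSuppMap n r' q υ (nSuppMap n p r τ (some (i, j))) = _
    by_cases hj : j = p <;> simp [nSuppMap, constMap, hj, h] <;> rfl

lemma nSupp_mul_sgl (c b : Fin n) (τ : Equiv.Perm (Fin n)) (a p q : Fin n) :
    nSuppMap n c b τ * sglMap n a b p q = sglMap n (τ.symm a) c p q := by
  funext x
  rcases x with _ | ⟨i, j⟩
  · rfl
  · show sglMap n a b p q (nSuppMap n c b τ (some (i, j))) = _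
    by_cases hj : j = c
    · have h1 : nSuppMap n c b τ (some (i, j)) = some (τ i, b) := by simp [nSuppMap, hj]; rfl
      rw [h1]
      show (if (some (τ i, b) : Bn n) = some (a, b) then some (p,q) else none)
         = (if (some (i, j) : Bn n) = some (τ.symm a, c) then some (p,q) else none)
      by_cases hi : i = τ.symm a
      · rw [if_pos (by rw [hi]; simp), if_pos (by rw [hi, hj])]
      · have hne : τ i ≠ a := fun hh => hi (by simp [← hh])
        rw [if_neg (fun hc => hne (congrArg Prod.fst (Option.some_inj.mp hc))),
            if_neg (fun hc => hi (congrArg Prod.fst (Option.some_inj.mp hc)))]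
    · have h1 : nSuppMap n c b τ (some (i, j)) = none := by simp [nSuppMap, hj]; rfl
      rw [h1]
      show (none : Bn n)
         = (if (some (i, j) : Bn n) = some (τ.symm a, c) then some (p,q) else none)
      rw [if_neg (fun hc => hj (congrArg Prod.snd (Option.some_inj.mp hc)))]

lemma nSupp_mul_sgl_ne (c b' : Fin n) (τ : Equiv.Perm (Fin n)) (a b p q : Fin n)
    (h : b' ≠ b) : nSuppMap n c b' τ * sglMap n a b p q = constMap n none := by
  funext x
  rcases x with _ | ⟨i, j⟩
  · exact sgl_ne _ _ _ _ _ (fun h => Option.some_ne_none _ h.symm)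
  · show sglMap n a b p q (nSuppMap n c b' τ (some (i, j))) = _
    by_cases hj : j = c
    · have h1 : nSuppMap n c b' τ (some (i, j)) = some (τ i, b') := by simp [nSuppMap, hj]; rfl
      rw [h1]
      show (if (some (τ i, b') : Bn n) = some (a, b) then some (p,q) else none) = _
      rw [if_neg (fun hc => h (congrArg Prod.snd (Option.some_inj.mp hc)))]
      rfl
    · have h1 : nSuppMap n c b' τ (some (i, j)) = none := by simp [nSuppMap, hj]; rfl
      rw [h1]; exact sgl_ne _ _ _ _ _ (fun h => Option.some_ne_none _ h.symm)

lemma sgl_mul_nSupp (k l p q q' : Fin n) (σ : Equiv.Perm (Fin n)) :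
    sglMap n k l p q * nSuppMap n q q' σ = sglMap n k l (σ p) q' := by
  funext x
  show nSuppMap n q q' σ (sglMap n k l p q x) = _
  by_cases hx : x = some (k, l)
  · rw [hx, sgl_self, sgl_self]; simp [nSuppMap]; rfl
  · rw [sgl_ne _ _ _ _ _ hx, sgl_ne _ _ _ _ _ hx]; rfl

lemma sgl_mul_nSupp_ne (k l p q p' q' : Fin n) (σ : Equiv.Perm (Fin n)) (h : q ≠ p') :
    sglMap n k l p q * nSuppMap n p' q' σ = constMap n none := by
  funext x
  show nSuppMap n p' q' σ (sglMap n k l p q x) = _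
  by_cases hx : x = some (k, l)
  · rw [hx, sgl_self]; simp [nSuppMap, constMap, h] <;> rfl
  · rw [sgl_ne _ _ _ _ _ hx]; rfl

lemma sgl_mul_sgl (k l a b p q : Fin n) :
    sglMap n k l a b * sglMap n a b p q = sglMap n k l p q := by
  funext x
  show sglMap n a b p q (sglMap n k l a b x) = _
  by_cases hx : x = some (k, l)
  · rw [hx, sgl_self, sgl_self, sgl_self]
  · rw [sgl_ne _ _ _ _ _ hx, sgl_ne _ _ _ _ _ hx]; exact sgl_ne _ _ _ _ _ (fun h => Option.some_ne_none _ h.symm)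

lemma sgl_mul_sgl_ne (k l a b k' l' p q : Fin n) (h : (a, b) ≠ (k', l')) :
    sglMap n k l a b * sglMap n k' l' p q = constMap n none := by
  funext x
  show sglMap n k' l' p q (sglMap n k l a b x) = _
  by_cases hx : x = some (k, l)
  · have h1 : sglMap n k l a b x = some (a, b) := by rw [hx]; exact sgl_self ..
    rw [h1]
    show (if (some (a, b) : Bn n) = some (k', l') then some (p,q) else none) = _
    rw [if_neg (fun hc => h (Option.some_inj.mp hc))]
    rfl
  · have h1 : sglMap n k l a b x = none := sgl_ne _ _ _ _ _ hx
    rw [h1]; exact sgl_ne _ _ _ _ _ (fun h => Option.some_ne_none _ h.symm)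

section Distinct
variable [NeZero n]

lemma constMap_injective : Function.Injective (constMap n) := fun _ _ h => congrFun h none

lemma nSupp_inj {p q p' q' : Fin n} {σ σ' : Equiv.Perm (Fin n)}
    (h : nSuppMap n p q σ = nSuppMap n p' q' σ') : p = p' ∧ q = q' ∧ σ = σ' := by
  have key : ∀ i : Fin n, nSuppMap n p q σ (some (i, p)) = nSuppMap n p' q' σ' (some (i, p)) :=
    fun i => congrFun h (some (i, p))
  have key0 := key 0
  simp only [nSuppMap, if_pos rfl] at key0
  by_cases hp : p = p'
  · subst hp
    simp only [if_pos rfl] at key0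
    have hq : q = q' := congrArg Prod.snd (Option.some_inj.mp key0)
    refine ⟨rfl, hq, Equiv.ext fun i => ?_⟩
    have ki := key i
    simp only [nSuppMap, if_pos rfl] at ki
    exact congrArg Prod.fst (Option.some_inj.mp ki)
  · have e1 : nSuppMap n p q σ (some (0, p)) = some (σ 0, q) := if_pos rfl
    have e2 : nSuppMap n p' q' σ' (some (0, p)) = none := if_neg hp
    exact absurd ((e1.symm.trans (key 0)).trans e2) (Option.some_ne_none _)

lemma sgl_inj {k l p q k' l' p' q' : Fin n}
    (h : sglMap n k l p q = sglMap n k' l' p' q') : k = k' ∧ l = l' ∧ p = p' ∧ q = q' := by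
  have h1 := congrFun h (some (k, l))
  simp only [sglMap, if_pos rfl] at h1
  by_cases hk : ((k, l) : Fin n × Fin n) = (k', l')
  · have : (some ((k,l) : Fin n × Fin n) : Bn n) = some (k', l') := by rw [hk]
    replace h1 : (some (p, q) : Bn n) = some (p', q') := by
      rw [← sgl_self k l p q, h, hk]; exact sgl_self ..
    have h2 := Option.some_inj.mp h1
    exact ⟨congrArg Prod.fst hk, congrArg Prod.snd hk,
      congrArg Prod.fst h2, congrArg Prod.snd h2⟩
  · replace h1 : (some (p, q) : Bn n) = none := by
      rw [← sgl_self k l p q, h]; exact sgl_ne _ _ _ _ _ (fun hc => hk (Option.some_inj.mp hc))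
    exact absurd h1 (by simp)

lemma const_ne_nSupp (c : Bn n) (p q : Fin n) (σ : Equiv.Perm (Fin n)) :
    constMap n c ≠ nSuppMap n p q σ := by
  intro h
  have h1 : c = none := congrFun h none
  have h2 : (none : Bn n) = some (σ 0, q) := by
    have h2 := congrFun h (some (0, p))
    rw [h1] at h2
    simpa [constMap, nSuppMap] using h2
  exact absurd h2 (by simp)

lemma const_ne_sgl (c : Bn n) (k l p q : Fin n) : constMap n c ≠ sglMap n k l p q := by
  intro h
  have h1 : c = none := congrFun h none
  have h2 : (none : Bn n) = some (p, q) := by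
    have h2 := congrFun h (some (k, l))
    rw [h1] at h2
    exact h2.trans (sgl_self ..)
  exact absurd h2 (by simp)

lemma nSupp_ne_sgl (hn : 2 ≤ n) (p q : Fin n) (σ : Equiv.Perm (Fin n)) (k l p' q' : Fin n) :
    nSuppMap n p q σ ≠ sglMap n k l p' q' := by
  intro h
  have h01 : (0 : Fin n) ≠ 1 := by
    intro h'
    rw [eq_comm, Fin.one_eq_zero_iff] at h'
    omega
  have h1 := congrFun h (some (0, p))
  have h2 := congrFun h (some (1, p))
  simp only [nSuppMap, sglMap, if_pos rfl] at h1 h2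
  by_cases e1 : (some ((0 : Fin n), p) : Bn n) = some (k, l)
  · by_cases e2 : (some ((1 : Fin n), p) : Bn n) = some (k, l)
    · rw [← e2] at e1
      exact h01 (congrArg Prod.fst (Option.some_inj.mp e1))
    · exact Option.some_ne_none _ (h2.trans (sgl_ne _ _ _ _ _ e2))
  · exact Option.some_ne_none _ (h1.trans (sgl_ne _ _ _ _ _ e1))

end Distinct

lemma APlus_mul_mem {a b : MapBn n} (ha : a ∈ APlus n) (hb : b ∈ APlus n) :
    a * b ∈ APlus n := by
  rcases hb with ⟨c, rfl⟩ | hb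
  · exact Or.inl ⟨c, rfl⟩
  rcases ha with ⟨c, rfl⟩ | ⟨p, q, σ, rfl⟩ | ⟨k, l, p, q, rfl⟩
  · exact Or.inl ⟨b c, rfl⟩
  · rcases hb with ⟨p', q', σ', rfl⟩ | ⟨k', l', p', q', rfl⟩
    · by_cases h : q = p'
      · subst h; rw [nSupp_mul_nSupp]; exact Or.inr (Or.inl ⟨_, _, _, rfl⟩)
      · rw [nSupp_mul_nSupp_ne _ _ _ _ h]; exact Or.inl ⟨_, rfl⟩
    · by_cases h : q = l'
      · subst h; rw [nSupp_mul_sgl]; exact Or.inr (Or.inr ⟨_, _, _, _, rfl⟩)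
      · rw [nSupp_mul_sgl_ne _ _ _ _ _ _ _ h]; exact Or.inl ⟨_, rfl⟩
  · rcases hb with ⟨p', q', σ', rfl⟩ | ⟨k', l', p', q', rfl⟩
    · by_cases h : q = p'
      · subst h; rw [sgl_mul_nSupp]; exact Or.inr (Or.inr ⟨_, _, _, _, rfl⟩)
      · rw [sgl_mul_nSupp_ne _ _ _ _ _ _ _ h]; exact Or.inl ⟨_, rfl⟩
    · by_cases h : ((p, q) : Fin n × Fin n) = (k', l')
      · obtain ⟨h1, h2⟩ := Prod.mk.injEq .. ▸ h
        subst h1; subst h2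
        rw [sgl_mul_sgl]; exact Or.inr (Or.inr ⟨_, _, _, _, rfl⟩)
      · rw [sgl_mul_sgl_ne _ _ _ _ _ _ _ _ h]; exact Or.inl ⟨_, rfl⟩

def APlusSub (n : ℕ) : Subsemigroup (MapBn n) where
  carrier := APlus n
  mul_mem' := APlus_mul_mem

lemma ncard_le_of_inj {α β : Type*} [Finite β] (f : α → β) (S : Set β)
    (hmem : ∀ x, f x ∈ S) (hinj : Function.Injective f) : Nat.card α ≤ S.ncard := by
  have hsub : Set.range f ⊆ S := by rintro _ ⟨x, rfl⟩; exact hmem x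
  have h1 : (Set.range f).ncard = Nat.card α := by
    rw [← Set.image_univ, Set.ncard_image_of_injective _ hinj, Set.ncard_univ]
  rw [← h1]
  exact Set.ncard_le_ncard hsub (Set.toFinite S)

lemma card_pairs : Nat.card (Fin n × Fin n) = n ^ 2 := by
  simp [Nat.card_eq_fintype_card, sq]

lemma fin_add_one_ne [NeZero n] (hn : 3 ≤ n) (k : Fin n) : k + 1 ≠ k := by
  intro h
  have h10 : (1 : Fin n) = 0 := by
    have : k + 1 = k + 0 := by rw [add_zero]; exact h
    exact add_left_cancel this
  rw [Fin.one_eq_zero_iff] at h10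
  omega

section Missing
variable [NeZero n]

lemma missing_ge (hn : 3 ≤ n) (T : Set (MapBn n))
    (hcl : ∀ a ∈ T, ∀ b ∈ T, a * b ∈ T) (w : MapBn n) (hw : w ∈ APlus n) (hwT : w ∉ T) :
    n ^ 2 ≤ (APlus n \ T).ncard := by
  classical
  have hn2 : 2 ≤ n := by omega
  rcases hw with ⟨c, rfl⟩ | ⟨p, q, σ, rfl⟩ | ⟨k, l, p, q, rfl⟩
  · -- constant maps
    rcases c with _ | ⟨i, j⟩
    · -- w = ξ_θ
      set f : Fin n × Fin n → MapBn n := fun x => sglMap n x.1 x.2 (x.1 + 1) x.2 with hf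
      have hmem : ∀ x, f x ∈ APlus n \ T := by
        rintro ⟨k, l⟩
        refine ⟨Or.inr (Or.inr ⟨_, _, _, _, rfl⟩), fun hT => hwT ?_⟩
        have hsq : f (k, l) * f (k, l) = constMap n none := by
          refine sgl_mul_sgl_ne _ _ _ _ _ _ _ _ ?_
          intro hc
          exact fin_add_one_ne hn k (congrArg Prod.fst hc)
        rw [← hsq]
        exact hcl _ hT _ hT
      have hinj : Function.Injective f := by
        rintro ⟨k, l⟩ ⟨k', l'⟩ h
        obtain ⟨h1, h2, _, _⟩ := sgl_inj h
        exact Prod.ext h1 h2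
      calc n ^ 2 = Nat.card (Fin n × Fin n) := card_pairs.symm
        _ ≤ _ := ncard_le_of_inj f _ (fun x => hmem x) hinj
    · -- w = ξ_{(i,j)}
      set f : Fin n × Fin n → MapBn n := fun x =>
        if constMap n (some x) ∈ T then sglMap n x.1 x.2 i j else constMap n (some x) with hf
      have hmem : ∀ x, f x ∈ APlus n \ T := by
        rintro ⟨k, l⟩
        simp only [hf]
        split_ifs with hT
        · refine ⟨Or.inr (Or.inr ⟨_, _, _, _, rfl⟩), fun hT2 => hwT ?_⟩
          have : constMap n (some (k, l)) * sglMap n k l i j = constMap n (some (i, j)) := by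
            exact congrArg (constMap n) (sgl_self k l i j)
          rw [← this]
          exact hcl _ hT _ hT2
        · exact ⟨Or.inl ⟨_, rfl⟩, hT⟩
      have hinj : Function.Injective f := by
        rintro ⟨k, l⟩ ⟨k', l'⟩ h
        simp only [hf] at h
        split_ifs at h with h1 h2 h2
        · obtain ⟨e1, e2, _, _⟩ := sgl_inj h
          exact Prod.ext e1 e2
        · exact absurd h.symm (const_ne_sgl _ _ _ _ _)
        · exact absurd h (const_ne_sgl _ _ _ _ _)
        · have := constMap_injective h
          exact congrArg (fun o => ((o : Option (Fin n × Fin n)).getD (k, l))) this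
      calc n ^ 2 = Nat.card (Fin n × Fin n) := card_pairs.symm
        _ ≤ _ := ncard_le_of_inj f _ (fun x => hmem x) hinj
  · -- w = nSuppMap p q σ
    set f : {r : Fin n // r ≠ q} × Equiv.Perm (Fin n) → MapBn n := fun x =>
      if nSuppMap n p x.1.1 x.2 ∈ T then nSuppMap n x.1.1 q (σ * x.2⁻¹)
      else nSuppMap n p x.1.1 x.2 with hf
    have hprod : ∀ (r : Fin n) (τ : Equiv.Perm (Fin n)),
        nSuppMap n p r τ * nSuppMap n r q (σ * τ⁻¹) = nSuppMap n p q σ := by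
      intro r τ
      rw [nSupp_mul_nSupp, inv_mul_cancel_right]
    have hmem : ∀ x, f x ∈ APlus n \ T := by
      rintro ⟨⟨r, hr⟩, τ⟩
      simp only [hf]
      split_ifs with hT
      · refine ⟨Or.inr (Or.inl ⟨_, _, _, rfl⟩), fun hT2 => hwT ?_⟩
        rw [← hprod r τ]
        exact hcl _ hT _ hT2
      · exact ⟨Or.inr (Or.inl ⟨_, _, _, rfl⟩), hT⟩
    have hinj : Function.Injective f := by
      rintro ⟨⟨r, hr⟩, τ⟩ ⟨⟨r', hr'⟩, τ'⟩ h
      simp only [hf] at h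
      split_ifs at h with h1 h2 h2
      · obtain ⟨e1, _, e3⟩ := nSupp_inj h
        have : τ = τ' := by
          have := mul_left_cancel e3
          exact inv_injective this
        simp [e1, this]
      · obtain ⟨_, e2, _⟩ := nSupp_inj h
        exact absurd e2.symm hr'
      · obtain ⟨_, e2, _⟩ := nSupp_inj h
        exact absurd e2 hr
      · obtain ⟨_, e2, e3⟩ := nSupp_inj h
        simp [e2, e3]
    have hcard : Nat.card ({r : Fin n // r ≠ q} × Equiv.Perm (Fin n)) = (n - 1) * n.factorial := by
      rw [Nat.card_prod, Nat.card_eq_fintype_card, Nat.card_eq_fintype_card]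
      rw [Fintype.card_perm, Fintype.card_fin]
      congr 1
      rw [Fintype.card_subtype_compl, Fintype.card_subtype_eq, Fintype.card_fin]
    have harith : n ^ 2 ≤ (n - 1) * n.factorial := by
      obtain ⟨m, rfl⟩ : ∃ m, n = m + 3 := ⟨n - 3, by omega⟩
      have h1 : (m + 3).factorial = (m+3) * ((m+2) * ((m+1) * m.factorial)) := rfl
      have h2 : 1 ≤ m.factorial := Nat.one_le_iff_ne_zero.mpr (Nat.factorial_ne_zero m)
      have h3 : m + 3 - 1 = m + 2 := rfl
      rw [h1, h3]
      have key : (m+3)^2 ≤ (m+2)*((m+3)*((m+2)*(m+1))) := by ring_nf; nlinarith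
      calc (m+3)^2 ≤ (m+2)*((m+3)*((m+2)*(m+1))) := key
        _ ≤ (m+2)*((m+3)*((m+2)*((m+1)*m.factorial))) := by
            have hF : (m+1) ≤ (m+1)*m.factorial :=
              Nat.le_mul_of_pos_right _ (Nat.factorial_pos m)
            exact Nat.mul_le_mul_left _ (Nat.mul_le_mul_left _ (Nat.mul_le_mul_left _ hF))
    calc n ^ 2 ≤ (n - 1) * n.factorial := harith
      _ = Nat.card ({r : Fin n // r ≠ q} × Equiv.Perm (Fin n)) := hcard.symm
      _ ≤ _ := ncard_le_of_inj f _ (fun x => hmem x) hinj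
  · -- w = sglMap k l p q
    set f : Fin n × Fin n → MapBn n := fun x =>
      if nSuppMap n l x.2 (Equiv.swap k x.1) ∈ T then sglMap n x.1 x.2 p q
      else nSuppMap n l x.2 (Equiv.swap k x.1) with hf
    have hprod : ∀ c d : Fin n,
        nSuppMap n l d (Equiv.swap k c) * sglMap n c d p q = sglMap n k l p q := by
      intro c d
      have h1 : (Equiv.swap k c) k = c := Equiv.swap_apply_left k c
      have h2 := nSupp_mul_sgl (n := n) l d (Equiv.swap k c) c p q
      rw [h2, Equiv.symm_swap, Equiv.swap_apply_right]
    have hmem : ∀ x, f x ∈ APlus n \ T := by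
      rintro ⟨c, d⟩
      simp only [hf]
      split_ifs with hT
      · refine ⟨Or.inr (Or.inr ⟨_, _, _, _, rfl⟩), fun hT2 => hwT ?_⟩
        rw [← hprod c d]
        exact hcl _ hT _ hT2
      · exact ⟨Or.inr (Or.inl ⟨_, _, _, rfl⟩), hT⟩
    have hinj : Function.Injective f := by
      rintro ⟨c, d⟩ ⟨c', d'⟩ h
      simp only [hf] at h
      split_ifs at h with h1 h2 h2
      · obtain ⟨e1, e2, _, _⟩ := sgl_inj h
        exact Prod.ext e1 e2
      · exact absurd h.symm (nSupp_ne_sgl hn2 _ _ _ _ _ _ _)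
      · exact absurd h (nSupp_ne_sgl hn2 _ _ _ _ _ _ _)
      · obtain ⟨_, e2, e3⟩ := nSupp_inj h
        have hc : c = c' := by
          have h4 := congrFun (congrArg (fun (e : Equiv.Perm (Fin n)) => e.toFun) e3) k
          simpa [Equiv.swap_apply_left] using h4
        exact Prod.ext hc e2
    calc n ^ 2 = Nat.card (Fin n × Fin n) := card_pairs.symm
      _ ≤ _ := ncard_le_of_inj f _ (fun x => hmem x) hinj

end Missing

section Card
variable [NeZero n]

def G (n : ℕ) :
    (Bn n ⊕ ((Fin n × Fin n) × Equiv.Perm (Fin n)) ⊕ ((Fin n × Fin n) × (Fin n × Fin n)))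
    → MapBn n
  | .inl c => constMap n c
  | .inr (.inl (pq, σ)) => nSuppMap n pq.1 pq.2 σ
  | .inr (.inr (kl, pq)) => sglMap n kl.1 kl.2 pq.1 pq.2

lemma G_inj (hn2 : 2 ≤ n) : Function.Injective (G n) := by
  rintro (c | ⟨⟨p, q⟩, σ⟩ | ⟨⟨k, l⟩, ⟨p, q⟩⟩) (c' | ⟨⟨p', q'⟩, σ'⟩ | ⟨⟨k', l'⟩, ⟨p', q'⟩⟩) h <;>
      simp only [G] at h
  · rw [constMap_injective h]
  · exact absurd h (const_ne_nSupp _ _ _ _)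
  · exact absurd h (const_ne_sgl _ _ _ _ _)
  · exact absurd h.symm (const_ne_nSupp _ _ _ _)
  · obtain ⟨e1, e2, e3⟩ := nSupp_inj h
    simp [e1, e2, e3]
  · exact absurd h (nSupp_ne_sgl hn2 _ _ _ _ _ _ _)
  · exact absurd h.symm (const_ne_sgl _ _ _ _ _)
  · exact absurd h.symm (nSupp_ne_sgl hn2 _ _ _ _ _ _ _)
  · obtain ⟨e1, e2, e3, e4⟩ := sgl_inj h
    simp [e1, e2, e3, e4]

lemma G_range : Set.range (G n) = APlus n := by
  ext f
  constructor
  · rintro ⟨(c | ⟨⟨p, q⟩, σ⟩ | ⟨⟨k, l⟩, ⟨p, q⟩⟩), rfl⟩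
    · exact Or.inl ⟨_, rfl⟩
    · exact Or.inr (Or.inl ⟨_, _, _, rfl⟩)
    · exact Or.inr (Or.inr ⟨k, l, p, q, rfl⟩)
  · rintro (⟨c, rfl⟩ | ⟨p, q, σ, rfl⟩ | ⟨k, l, p, q, rfl⟩)
    · exact ⟨.inl c, rfl⟩
    · exact ⟨.inr (.inl ((p, q), σ)), rfl⟩
    · exact ⟨.inr (.inr ((k, l), (p, q))), rfl⟩

lemma APlus_ncard (hn2 : 2 ≤ n) :
    (APlus n).ncard = (n.factorial + 1) * n ^ 2 + n ^ 4 + 1 := by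
  rw [← G_range, ← Set.image_univ, Set.ncard_image_of_injective _ (G_inj hn2), Set.ncard_univ]
  have : Nat.card (Bn n ⊕ ((Fin n × Fin n) × Equiv.Perm (Fin n))
      ⊕ ((Fin n × Fin n) × (Fin n × Fin n)))
      = (n ^ 2 + 1) + (n ^ 2 * n.factorial + n ^ 4) := by
    rw [Nat.card_sum, Nat.card_sum, Nat.card_prod, Nat.card_prod]
    have hB : Nat.card (Bn n) = n ^ 2 + 1 := by
      have : Nat.card (Bn n) = Nat.card (Option (Fin n × Fin n)) := rfl
      rw [this, Nat.card_eq_fintype_card]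
      simp [sq]
    rw [hB]
    simp only [Nat.card_prod, Nat.card_eq_fintype_card, Fintype.card_perm, Fintype.card_fin,
      Fintype.card_prod]
    ring
  rw [this]
  ring

end Card

section Vset
variable [NeZero n]

def Vset (n : ℕ) : Set (MapBn n) := {f | ∃ i j : Fin n, f = constMap n (some (i, j))}

lemma Vset_subset : Vset n ⊆ APlus n := by
  rintro f ⟨i, j, rfl⟩
  exact Or.inl ⟨_, rfl⟩

lemma none_fixed {b : MapBn n} (hb : (∃ p q σ, b = nSuppMap n p q σ) ∨
    (∃ k l p q, b = sglMap n k l p q)) : b none = none := by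
  rcases hb with ⟨p, q, σ, rfl⟩ | ⟨k, l, p, q, rfl⟩
  · rfl
  · exact sgl_ne _ _ _ _ _ (fun h => Option.some_ne_none _ h.symm)

lemma Vset_prime {a b : MapBn n} (ha : a ∈ APlus n) (hb : b ∈ APlus n)
    (hab : a * b ∈ Vset n) : a ∈ Vset n ∨ b ∈ Vset n := by
  obtain ⟨i, j, hij⟩ := hab
  rcases hb with ⟨c, rfl⟩ | hb
  · right
    have : constMap n c = constMap n (some (i, j)) := by rw [← mul_const a c, hij]
    exact ⟨i, j, this⟩
  · left
    have hbn : b none = none := none_fixed hb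
    rcases ha with ⟨c, rfl⟩ | ha
    · rcases c with _ | ⟨k, l⟩
      · exfalso
        have : constMap n (none : Bn n) * b = constMap n (b none) := const_mul _ _
        rw [hbn] at this
        rw [this] at hij
        have := constMap_injective hij
        simp at this
      · exact ⟨k, l, rfl⟩
    · exfalso
      have han : a none = none := none_fixed ha
      have h1 : (a * b) none = some (i, j) := by rw [hij]; rfl
      rw [show (a * b) none = b (a none) from rfl, han, hbn] at h1
      simp at h1

lemma Vset_ncard : (Vset n).ncard = n ^ 2 := by
  have : Vset n = (fun x : Fin n × Fin n => constMap n (some x)) '' Set.univ := by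
    ext f
    constructor
    · rintro ⟨i, j, rfl⟩; exact ⟨(i, j), trivial, rfl⟩
    · rintro ⟨⟨i, j⟩, -, rfl⟩; exact ⟨i, j, rfl⟩
  rw [this, Set.ncard_image_of_injective _ (fun x y h =>
    Option.some_inj.mp (constMap_injective h)), Set.ncard_univ, card_pairs]

lemma compl_Vset_closed {a b : MapBn n} (ha : a ∈ APlus n \ Vset n)
    (hb : b ∈ APlus n \ Vset n) : a * b ∈ APlus n \ Vset n := by
  refine ⟨APlus_mul_mem ha.1 hb.1, fun hV => ?_⟩
  rcases Vset_prime ha.1 hb.1 hV with h | h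
  · exact ha.2 h
  · exact hb.2 h

end Vset

end APlusProof

open APlusProof in
theorem large_rank_APlus (n : ℕ) [NeZero n] (hn : 3 ≤ n) :
    let V : Set (MapBn n) := {f | ∃ i j : Fin n, f = constMap n (some (i, j))}
    sInf {k | ∀ U : Set (MapBn n), U ⊆ APlus n → U.ncard = k →
        (Subsemigroup.closure U : Set (MapBn n)) = APlus n} =
      n.factorial * n ^ 2 + n ^ 4 + 2 ∧
    (V ⊆ APlus n ∧ V.Nonempty ∧
      (∀ a ∈ APlus n, ∀ b ∈ APlus n, a * b ∈ V → a ∈ V ∨ b ∈ V) ∧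
      (∀ W ⊆ APlus n, W.Nonempty →
        (∀ a ∈ APlus n, ∀ b ∈ APlus n, a * b ∈ W → a ∈ W ∨ b ∈ W) →
        V.ncard ≤ W.ncard) ∧
      V.ncard = n ^ 2) ∧
    (APlus n).ncard = (n.factorial + 1) * n ^ 2 + n ^ 4 + 1 := by
  intro V
  have hn2 : 2 ≤ n := by omega
  have hVeq : V = Vset n := rfl
  have hsq : 1 ≤ n ^ 2 := Nat.one_le_pow 2 n (by omega)
  refine ⟨?_, ?_, APlus_ncard hn2⟩
  · -- the sInf part
    set N := n.factorial * n ^ 2 + n ^ 4 + 2 with hN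
    have hNK : N ∈ {k | ∀ U : Set (MapBn n), U ⊆ APlus n → U.ncard = k →
        (Subsemigroup.closure U : Set (MapBn n)) = APlus n} := by
      intro U hU hcardU
      have hTsub : (Subsemigroup.closure U : Set (MapBn n)) ⊆ APlus n := by
        have h := Subsemigroup.closure_le (S := APlusSub n).mpr hU
        exact fun x hx => h hx
      by_contra hne
      obtain ⟨w, hwA, hwT⟩ : ∃ w, w ∈ APlus n ∧ w ∉ (Subsemigroup.closure U : Set (MapBn n)) := by
        by_contra hcon
        push_neg at hcon
        exact hne (Set.Subset.antisymm hTsub hcon)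
      have hcl : ∀ a ∈ (Subsemigroup.closure U : Set (MapBn n)),
          ∀ b ∈ (Subsemigroup.closure U : Set (MapBn n)),
          a * b ∈ (Subsemigroup.closure U : Set (MapBn n)) :=
        fun a ha b hb => mul_mem ha hb
      have h1 := missing_ge hn _ hcl w hwA hwT
      have hUsub : U ⊆ (Subsemigroup.closure U : Set (MapBn n)) := Subsemigroup.subset_closure
      have h2 : (APlus n \ (Subsemigroup.closure U : Set (MapBn n))).ncard
          ≤ (APlus n \ U).ncard :=
        Set.ncard_le_ncard (Set.diff_subset_diff_right hUsub) (Set.toFinite _)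
      have h3 : (APlus n \ U).ncard = (APlus n).ncard - U.ncard :=
        Set.ncard_diff hU (Set.toFinite _)
      rw [APlus_ncard hn2, hcardU] at h3
      have e1 : (n.factorial + 1) * n ^ 2 = n.factorial * n ^ 2 + n ^ 2 := by ring
      rw [e1] at h3
      rw [hN] at h3
      generalize hA : n.factorial * n ^ 2 = a at h3
      generalize hB : n ^ 4 = b at h3
      generalize hC : n ^ 2 = c at h1 h3 hsq
      omega
    have hlow : ∀ k ∈ {k | ∀ U : Set (MapBn n), U ⊆ APlus n → U.ncard = k →
        (Subsemigroup.closure U : Set (MapBn n)) = APlus n}, N ≤ k := by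
      intro k hk
      by_contra hlt
      push_neg at hlt
      have hVA : (APlus n \ Vset n).ncard
          = (n.factorial + 1) * n ^ 2 + n ^ 4 + 1 - n ^ 2 := by
        rw [Set.ncard_diff Vset_subset (Set.toFinite _), APlus_ncard hn2, Vset_ncard]
      have hkle : k ≤ (APlus n \ Vset n).ncard := by
        rw [hVA]
        have e1 : (n.factorial + 1) * n ^ 2 = n.factorial * n ^ 2 + n ^ 2 := by ring
        rw [e1, hN] at *
        generalize hA : n.factorial * n ^ 2 = a at *
        generalize hB : n ^ 4 = b at *
        generalize hC : n ^ 2 = c at *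
        omega
      obtain ⟨U, hUsub, hUcard⟩ := Set.exists_subset_card_eq hkle
      have hgen := hk U (hUsub.trans Set.diff_subset) hUcard
      have hclo : (Subsemigroup.closure U : Set (MapBn n)) ⊆ APlus n \ Vset n := by
        have h := Subsemigroup.closure_le
          (S := ⟨APlus n \ Vset n, fun ha hb => compl_Vset_closed ha hb⟩).mpr hUsub
        exact fun x hx => h hx
      rw [hgen] at hclo
      have hc0 : constMap n (some (0, 0)) ∈ APlus n := Or.inl ⟨_, rfl⟩
      exact (hclo hc0).2 ⟨0, 0, rfl⟩
    exact le_antisymm (Nat.sInf_le hNK) (le_csInf ⟨N, hNK⟩ hlow)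
  · refine ⟨?_, ?_, ?_, ?_, ?_⟩
    · rw [hVeq]; exact Vset_subset
    · exact ⟨constMap n (some (0, 0)), ⟨0, 0, rfl⟩⟩
    · intro a ha b hb hab
      rw [hVeq] at hab ⊢
      exact Vset_prime ha hb hab
    · intro W hW hWne hWprime
      rw [hVeq, Vset_ncard]
      obtain ⟨w, hw⟩ := hWne
      have hTcl : ∀ a ∈ APlus n \ W, ∀ b ∈ APlus n \ W, a * b ∈ APlus n \ W := by
        intro a ha b hb
        refine ⟨APlus_mul_mem ha.1 hb.1, fun hmem => ?_⟩
        rcases hWprime a ha.1 b hb.1 hmem with h | h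
        · exact ha.2 h
        · exact hb.2 h
      have hmiss := missing_ge hn (APlus n \ W) hTcl w (hW hw) (fun hc => hc.2 hw)
      rwa [Set.diff_diff_cancel_left hW] at hmiss
    · rw [hVeq]; exact Vset_ncard
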